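/- Let ξ ∈ 𝔽_q((T^{-1})) be irrational and let α ∈ 𝔽_q((T^{-1})) not belong to 𝔽_q[T] + 𝔽_q[T]·ξ. Then there exist infinitely many polynomials Q ∈ 𝔽_q[T] such that ‖Qξ − α‖ ≤ 1/(q²·|Q|). -/

import Mathlib

open Polynomial Filter
open scoped Classical ENNReal

noncomputable section

variable (Fq : Type) [Field Fq] [Fintype Fq]

/-- The element `T` inside the Laurent-series field `𝔽_q((T⁻¹))`, which we realize
as the field of Hahn/Laurent series in the variable `T⁻¹`. -/
def Tel : LaurentSeries Fq := HahnSeries.single (-1 : ℤ) 1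

/-- The inverse variable `T⁻¹` itself. -/
def TinvEl : LaurentSeries Fq := HahnSeries.single (1 : ℤ) 1

/-- The embedding of the polynomial ring `𝔽_q[T]` into `𝔽_q((T⁻¹))`,
sending `T` to `Tel`. -/
def polyToL (P : Polynomial Fq) : LaurentSeries Fq :=
  Polynomial.eval₂ HahnSeries.C (Tel Fq) P

/-- The absolute value `|x| = q ^ (deg x)` on `𝔽_q((T⁻¹))`, with `|0| = 0`.
Here the degree of `x ≠ 0` is minus the order of `x` as a series in `T⁻¹`. -/
def labs (x : LaurentSeries Fq) : ℝ :=
  if x = 0 then 0 else (Fintype.card Fq : ℝ) ^ (-x.order)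

/-- `‖x‖`: the distance from `x` to the nearest polynomial. -/
def lnorm (x : LaurentSeries Fq) : ℝ :=
  ⨅ P : Polynomial Fq, labs Fq (x - polyToL Fq P)

/-- `x ∈ 𝔽_q(T)`, i.e. `x` is rational. -/
def IsRat (x : LaurentSeries Fq) : Prop :=
  ∃ P Q : Polynomial Fq, Q ≠ 0 ∧ polyToL Fq Q * x = polyToL Fq P



section Aux
variable {Fq}

lemma qR_one_lt : (1:ℝ) < (Fintype.card Fq : ℝ) := by
  exact_mod_cast Fintype.one_lt_card

lemma qR_pos : (0:ℝ) < (Fintype.card Fq : ℝ) := lt_trans one_pos qR_one_lt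

lemma labs_nonneg (x : LaurentSeries Fq) : 0 ≤ labs Fq x := by
  unfold labs; split
  · exact le_refl _
  · exact le_of_lt (zpow_pos qR_pos _)

lemma labs_neg (x : LaurentSeries Fq) : labs Fq (-x) = labs Fq x := by
  unfold labs
  rw [HahnSeries.order_neg, neg_eq_zero]

lemma labs_le_zpow {x : LaurentSeries Fq} {n : ℤ} (h : ∀ i < n, x.coeff i = 0) :
    labs Fq x ≤ (Fintype.card Fq : ℝ) ^ (-n) := by
  unfold labs; split
  · exact (zpow_pos qR_pos _).le
  · next hx =>
    have hn : n ≤ x.order := by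
      by_contra hlt; push_neg at hlt
      exact HahnSeries.coeff_order_eq_zero.not.2 hx (h _ hlt)
    exact zpow_le_zpow_right₀ qR_one_lt.le (neg_le_neg hn)

lemma labs_pos_of_ne {x : LaurentSeries Fq} (hx : x ≠ 0) : 0 < labs Fq x := by
  unfold labs; rw [if_neg hx]; exact zpow_pos qR_pos _

lemma polyToL_add (P Q : Polynomial Fq) :
    polyToL Fq (P + Q) = polyToL Fq P + polyToL Fq Q := eval₂_add _ _

lemma polyToL_sub (P Q : Polynomial Fq) :
    polyToL Fq (P - Q) = polyToL Fq P - polyToL Fq Q := eval₂_sub _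

lemma polyToL_mul (P Q : Polynomial Fq) :
    polyToL Fq (P * Q) = polyToL Fq P * polyToL Fq Q := eval₂_mul _ _

lemma polyToL_zero : polyToL Fq 0 = 0 := eval₂_zero _ _

lemma polyToL_neg (P : Polynomial Fq) : polyToL Fq (-P) = - polyToL Fq P := by
  rw [show -P = 0 - P by ring, polyToL_sub, polyToL_zero, zero_sub]

lemma polyToL_monomial (n : ℕ) (a : Fq) :
    polyToL Fq (monomial n a) = HahnSeries.single (-(n:ℤ)) a := by
  unfold polyToL
  rw [← C_mul_X_pow_eq_monomial, eval₂_mul, eval₂_C, eval₂_X_pow]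
  unfold Tel
  rw [HahnSeries.single_pow]
  have h0 : (HahnSeries.C a : LaurentSeries Fq) = HahnSeries.single 0 a := rfl
  rw [h0, HahnSeries.single_mul_single]
  congr 1
  · simp [nsmul_eq_mul]
  · simp

lemma lcoeff_sum {σ : Type*} (s : Finset σ) (f : σ → LaurentSeries Fq) (i : ℤ) :
    (∑ x ∈ s, f x).coeff i = ∑ x ∈ s, (f x).coeff i := by
  classical
  induction s using Finset.induction with
  | empty => simp [HahnSeries.coeff_zero]
  | insert _ _ h ih => rw [Finset.sum_insert h, Finset.sum_insert h, HahnSeries.coeff_add, ih]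

lemma polyToL_eq_sum (P : Polynomial Fq) :
    polyToL Fq P = ∑ k ∈ Finset.range (P.natDegree + 1),
      HahnSeries.single (-(k:ℤ)) (P.coeff k) := by
  conv_lhs => rw [P.as_sum_range' (P.natDegree + 1) (lt_add_one _)]
  unfold polyToL
  rw [Polynomial.eval₂_finset_sum]
  exact Finset.sum_congr rfl fun k _ => polyToL_monomial k (P.coeff k)

lemma polyToL_coeff (P : Polynomial Fq) (n : ℕ) :
    (polyToL Fq P).coeff (-(n:ℤ)) = P.coeff n := by
  rw [polyToL_eq_sum, lcoeff_sum]
  have h1 : ∀ k ∈ Finset.range (P.natDegree + 1),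
      (HahnSeries.single (-(k:ℤ)) (P.coeff k)).coeff (-(n:ℤ))
        = if n = k then P.coeff k else 0 := by
    intro k _
    rw [HahnSeries.coeff_single]
    simp [neg_inj, Nat.cast_inj]
  rw [Finset.sum_congr rfl h1, Finset.sum_ite_eq]
  split
  · rfl
  · next h =>
    rw [Polynomial.coeff_eq_zero_of_natDegree_lt]
    simp only [Finset.mem_range] at h
    omega

lemma polyToL_coeff_pos (P : Polynomial Fq) {i : ℤ} (hi : 0 < i) :
    (polyToL Fq P).coeff i = 0 := by
  rw [polyToL_eq_sum, lcoeff_sum]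
  refine Finset.sum_eq_zero fun k _ => ?_
  rw [HahnSeries.coeff_single_of_ne]
  omega

lemma polyToL_coeff_nonpos (P : Polynomial Fq) {i : ℤ} (hi : i ≤ 0) :
    (polyToL Fq P).coeff i = P.coeff (-i).toNat := by
  have h := polyToL_coeff P (-i).toNat
  rw [show -((((-i).toNat) : ℕ) : ℤ) = i by omega] at h
  exact h

lemma eq_zero_of_coeff_vanish {P : Polynomial Fq}
    (h : ∀ i < (1:ℤ), (polyToL Fq P).coeff i = 0) : P = 0 := by
  ext n
  rw [Polynomial.coeff_zero]
  have := h (-(n:ℤ)) (by omega)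
  rwa [polyToL_coeff] at this

lemma polyToL_ne_zero {Q : Polynomial Fq} (hQ : Q ≠ 0) : polyToL Fq Q ≠ 0 := by
  intro h
  exact hQ (eq_zero_of_coeff_vanish fun i _ => by rw [h, HahnSeries.coeff_zero])

lemma labs_polyToL_le (Q : Polynomial Fq) :
    labs Fq (polyToL Fq Q) ≤ (Fintype.card Fq : ℝ) ^ (Q.natDegree : ℤ) := by
  have h := labs_le_zpow (x := polyToL Fq Q) (n := -(Q.natDegree : ℤ)) ?_
  · rwa [neg_neg] at h
  · intro i hi
    rw [polyToL_coeff_nonpos Q (by omega)]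
    exact Polynomial.coeff_eq_zero_of_natDegree_lt (by omega)

lemma exists_intpart (x : LaurentSeries Fq) :
    ∃ P : Polynomial Fq, ∀ i < (1:ℤ), (x - polyToL Fq P).coeff i = 0 := by
  by_cases hx : x = 0
  · refine ⟨0, fun i _ => ?_⟩
    rw [hx, polyToL_zero, sub_zero, HahnSeries.coeff_zero]
  · set K := (1 - x.order).toNat with hK
    have hKK : (1 : ℤ) - x.order ≤ (K : ℤ) := Int.self_le_toNat _
    refine ⟨∑ n ∈ Finset.range K, monomial n (x.coeff (-(n:ℤ))), fun i hi => ?_⟩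
    rw [HahnSeries.coeff_sub]
    have hple : (polyToL Fq (∑ n ∈ Finset.range K, monomial n (x.coeff (-(n:ℤ))))).coeff i
        = if (-i).toNat < K then x.coeff i else 0 := by
      rw [polyToL_coeff_nonpos _ (by omega), Polynomial.finset_sum_coeff]
      simp only [Polynomial.coeff_monomial]
      rw [Finset.sum_ite_eq' (Finset.range K) ((-i).toNat) (fun n => x.coeff (-(n:ℤ)))]
      simp only [Finset.mem_range]
      split
      · congr 1; omega
      · rfl
    rw [hple]
    split
    · exact sub_self _
    · next h =>
      rw [sub_zero]
      exact HahnSeries.coeff_eq_zero_of_lt_order (by omega)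

lemma dirichlet (ξ : LaurentSeries Fq) (hξ : ¬ IsRat Fq ξ) (N : ℕ) :
    ∃ Q P : Polynomial Fq, Q ≠ 0 ∧ Q.natDegree ≤ N ∧
      polyToL Fq Q * ξ - polyToL Fq P ≠ 0 ∧
      ∀ i < (N:ℤ) + 1, (polyToL Fq Q * ξ - polyToL Fq P).coeff i = 0 := by
  classical
  set F : (Fin (N+1) → Fq) → Polynomial Fq :=
    fun v => ∑ n : Fin (N+1), monomial n.val (v n) with hF
  have hFcoeff : ∀ (v : Fin (N+1) → Fq) (m : ℕ) (hm : m < N + 1),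
      (F v).coeff m = v ⟨m, hm⟩ := by
    intro v m hm
    rw [hF]
    simp only [Polynomial.finset_sum_coeff, Polynomial.coeff_monomial]
    rw [Finset.sum_eq_single (⟨m, hm⟩ : Fin (N+1))]
    · simp
    · intro b _ hb
      rw [if_neg]
      intro hbm
      exact hb (Fin.ext hbm)
    · intro h; exact absurd (Finset.mem_univ _) h
  have hFdeg : ∀ v, (F v).natDegree ≤ N := by
    intro v
    refine Polynomial.natDegree_le_iff_coeff_eq_zero.mpr fun m hm => ?_
    rw [hF]
    simp only [Polynomial.finset_sum_coeff, Polynomial.coeff_monomial]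
    refine Finset.sum_eq_zero fun b _ => ?_
    rw [if_neg]
    have := b.isLt
    omega
  have hcard : Fintype.card (Fin N → Fq) < Fintype.card (Fin (N+1) → Fq) := by
    rw [Fintype.card_fun, Fintype.card_fun, Fintype.card_fin, Fintype.card_fin]
    exact Nat.pow_lt_pow_right Fintype.one_lt_card (lt_add_one N)
  obtain ⟨v, w, hvw, hG⟩ := Fintype.exists_ne_map_eq_of_card_lt
      (fun v (j : Fin N) => (polyToL Fq (F v) * ξ).coeff ((j:ℤ)+1)) hcard
  set Q := F v - F w with hQ
  have hQne : Q ≠ 0 := by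
    intro h
    apply hvw
    have hFeq : F v = F w := sub_eq_zero.mp h
    funext n
    have := congrArg (fun p => Polynomial.coeff p n.val) hFeq
    rwa [hFcoeff v n.val n.isLt, hFcoeff w n.val n.isLt] at this
  have hQdeg : Q.natDegree ≤ N :=
    le_trans (natDegree_sub_le _ _) (max_le (hFdeg v) (hFdeg w))
  have hmid : ∀ i : ℤ, 0 < i → i < (N:ℤ) + 1 → (polyToL Fq Q * ξ).coeff i = 0 := by
    intro i h1 h2
    have hNpos : 0 < N := by omega
    have hsplit : polyToL Fq Q * ξ = polyToL Fq (F v) * ξ - polyToL Fq (F w) * ξ := by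
      rw [hQ, polyToL_sub]; ring
    set j : Fin N := ⟨(i-1).toNat, by omega⟩ with hj
    have hji : ((j:ℕ):ℤ) + 1 = i := by rw [hj]; simp; omega
    have hGj := congrFun hG j
    rw [hsplit, HahnSeries.coeff_sub, ← hji, hGj, sub_self]
  obtain ⟨P, hP⟩ := exists_intpart (polyToL Fq Q * ξ)
  refine ⟨Q, P, hQne, hQdeg, ?_, ?_⟩
  · intro h
    rw [sub_eq_zero] at h
    exact hξ ⟨P, Q, hQne, h⟩
  · intro i hi
    rcases lt_or_ge i 1 with h1 | h1
    · exact hP i h1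
    · rw [HahnSeries.coeff_sub, polyToL_coeff_pos P (by omega), hmid i (by omega) hi, sub_self]

lemma match_lemma (θ : LaurentSeries Fq) (m : ℤ) (hm : θ.coeff m ≠ 0)
    (hθ : ∀ i < m, θ.coeff i = 0) :
    ∀ (k : ℕ) (r : LaurentSeries Fq), (∀ i < m - k, r.coeff i = 0) →
    ∃ A : Polynomial Fq, A.natDegree ≤ k ∧
      ∀ i < m + 1, (r - polyToL Fq A * θ).coeff i = 0 := by
  intro k
  induction k with
  | zero =>
    intro r hr
    set c := r.coeff m * (θ.coeff m)⁻¹ with hc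
    refine ⟨C c, by simp, ?_⟩
    intro i hi
    have hCm : polyToL Fq (C c) = HahnSeries.single (0:ℤ) c := by
      rw [← Polynomial.monomial_zero_left, polyToL_monomial]
      norm_num
    have hsc : (HahnSeries.single (0:ℤ) c * θ).coeff i = c * θ.coeff i := by
      have h := HahnSeries.coeff_single_mul_add (r := c) (x := θ) (a := i) (b := (0:ℤ))
      rwa [add_zero] at h
    rw [HahnSeries.coeff_sub, hCm, hsc]
    rcases lt_or_ge i m with h | h
    · rw [hr i (by omega), hθ i h, mul_zero, sub_zero]
    · have hieq : i = m := by omega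
      rw [hieq, hc, mul_assoc, inv_mul_cancel₀ hm, mul_one, sub_self]
  | succ k ih =>
    intro r hr
    set c := r.coeff (m - (k+1)) * (θ.coeff m)⁻¹ with hc
    have hco : ∀ i : ℤ, (polyToL Fq (monomial (k+1) c) * θ).coeff i
        = c * θ.coeff (i + (k+1)) := by
      intro i
      rw [polyToL_monomial]
      have h := HahnSeries.coeff_single_mul_add (r := c) (x := θ)
        (b := -(((k+1):ℕ):ℤ)) (a := i + (((k+1):ℕ):ℤ))
      rw [show i + (((k+1):ℕ):ℤ) + -(((k+1):ℕ):ℤ) = i by ring] at h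
      rw [h]
      norm_num
    set r' := r - polyToL Fq (monomial (k+1) c) * θ with hr'
    have hr'van : ∀ i < m - k, r'.coeff i = 0 := by
      intro i hik
      rw [hr', HahnSeries.coeff_sub, hco]
      rcases lt_or_ge i (m - (k+1)) with h | h
      · rw [hr i (by push_cast; omega), hθ (i + (k+1)) (by omega),
          mul_zero, sub_zero]
      · have hieq : i = m - (k+1) := by omega
        rw [hieq, show m - (k+1) + ((k:ℤ)+1) = m by ring, hc, mul_assoc,
          inv_mul_cancel₀ hm, mul_one, sub_self]
    obtain ⟨A', hA'deg, hA'⟩ := ih r' hr'van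
    refine ⟨monomial (k+1) c + A', ?_, ?_⟩
    · refine le_trans (natDegree_add_le _ _) (max_le (natDegree_monomial_le c) (by omega))
    · intro i hi
      have heq : r - polyToL Fq (monomial (k+1) c + A') * θ = r' - polyToL Fq A' * θ := by
        rw [polyToL_add, hr']; ring
      rw [heq]
      exact hA' i hi

lemma step (ξ α : LaurentSeries Fq) (hξ : ¬ IsRat Fq ξ) (s : ℤ) (hs : 1 ≤ s)
    (Q P : Polynomial Fq)
    (hdeg : Q = 0 ∨ (Q.natDegree : ℤ) ≤ s - 2)
    (hV : ∀ i < s, (α - polyToL Fq P - polyToL Fq Q * ξ).coeff i = 0) :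
    ∃ s' : ℤ, s < s' ∧ ∃ Q' P' : Polynomial Fq,
      (Q' = 0 ∨ (Q'.natDegree : ℤ) ≤ s' - 2) ∧
      ∀ i < s', (α - polyToL Fq P' - polyToL Fq Q' * ξ).coeff i = 0 := by
  obtain ⟨Q₀, P₀, hQ₀ne, hQ₀deg, hθne, hθvan⟩ := dirichlet ξ hξ (s-1).toNat
  set θ := polyToL Fq Q₀ * ξ - polyToL Fq P₀ with hθdef
  have hcast : (((s-1).toNat : ℕ) : ℤ) = s - 1 := by omega
  have hθvan' : ∀ i < s, θ.coeff i = 0 := fun i hi => hθvan i (by omega)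
  set m := θ.order with hmdef
  have hmc : θ.coeff m ≠ 0 := HahnSeries.coeff_order_eq_zero.not.2 hθne
  have hms : s ≤ m := by
    by_contra h
    push_neg at h
    exact hmc (hθvan' m h)
  set k := (m - s).toNat with hk
  have hkc : (k : ℤ) = m - s := by omega
  set r := α - polyToL Fq P - polyToL Fq Q * ξ with hrdef
  obtain ⟨A, hAdeg, hA⟩ := match_lemma θ m hmc
    (fun i hi => HahnSeries.coeff_eq_zero_of_lt_order hi) k r
    (fun i hi => hV i (by omega))
  refine ⟨m + 1, by omega, Q + A * Q₀, P - A * P₀, ?_, ?_⟩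
  · right
    have h1 : (Q + A * Q₀).natDegree ≤ max Q.natDegree (A * Q₀).natDegree :=
      natDegree_add_le _ _
    have h2 : (A * Q₀).natDegree ≤ A.natDegree + Q₀.natDegree := natDegree_mul_le
    have hQb : (Q.natDegree : ℤ) ≤ m - 1 := by
      rcases hdeg with h | h
      · rw [h, natDegree_zero]; omega
      · omega
    have hABd : ((A * Q₀).natDegree : ℤ) ≤ m - 1 := by
      have : ((A * Q₀).natDegree : ℤ) ≤ (A.natDegree : ℤ) + (Q₀.natDegree : ℤ) := by
        exact_mod_cast h2
      have hA' : (A.natDegree : ℤ) ≤ (k : ℤ) := by exact_mod_cast hAdeg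
      have hQ₀' : (Q₀.natDegree : ℤ) ≤ (((s-1).toNat : ℕ) : ℤ) := by exact_mod_cast hQ₀deg
      omega
    have := (Nat.cast_le (α := ℤ)).mpr h1
    rw [Nat.cast_max] at this
    omega
  · intro i hi
    have heq : α - polyToL Fq (P - A * P₀) - polyToL Fq (Q + A * Q₀) * ξ
        = r - polyToL Fq A * θ := by
      rw [hrdef, hθdef, polyToL_sub, polyToL_add, polyToL_mul, polyToL_mul]
      ring
    rw [heq]
    exact hA i hi

lemma ex (ξ α : LaurentSeries Fq) (hξ : ¬ IsRat Fq ξ) :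
    ∀ n : ℕ, ∃ s : ℤ, 1 ≤ s ∧ (n:ℤ) ≤ s ∧ ∃ Q P : Polynomial Fq,
      (Q = 0 ∨ (Q.natDegree : ℤ) ≤ s - 2) ∧
      ∀ i < s, (α - polyToL Fq P - polyToL Fq Q * ξ).coeff i = 0 := by
  intro n
  induction n with
  | zero =>
    obtain ⟨P, hP⟩ := exists_intpart α
    refine ⟨1, le_refl _, by norm_num, 0, P, Or.inl rfl, fun i hi => ?_⟩
    rw [polyToL_zero, zero_mul, sub_zero]
    exact hP i hi
  | succ n ih =>
    obtain ⟨s, hs1, hsn, Q, P, hdeg, hV⟩ := ih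
    obtain ⟨s', hss', Q', P', hdeg', hV'⟩ := step ξ α hξ s hs1 Q P hdeg hV
    exact ⟨s', by omega, by push_cast; omega, Q', P', hdeg', hV'⟩

end Aux

/-- **Inhomogeneous Minkowski theorem over `𝔽_q((T⁻¹))`.**
If `ξ` is irrational and `α ∉ 𝔽_q[T] + 𝔽_q[T]·ξ`, then there exist infinitely many
polynomials `Q ∈ 𝔽_q[T]` with `‖Qξ − α‖ ≤ 1 / (q² |Q|)`. -/
theorem stmt0 (ξ α : LaurentSeries Fq) (hξ : ¬ IsRat Fq ξ)
    (hα : ∀ P Q : Polynomial Fq, α ≠ polyToL Fq P + polyToL Fq Q * ξ) :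
    {Q : Polynomial Fq |
      lnorm Fq (polyToL Fq Q * ξ - α) ≤
        1 / ((Fintype.card Fq : ℝ) ^ 2 * labs Fq (polyToL Fq Q))}.Infinite := by
  classical
  by_contra hfin
  rw [Set.not_infinite] at hfin
  set S := {Q : Polynomial Fq |
      lnorm Fq (polyToL Fq Q * ξ - α) ≤
        1 / ((Fintype.card Fq : ℝ) ^ 2 * labs Fq (polyToL Fq Q))} with hS
  have hex := ex ξ α hξ
  choose s hs1 hsn Q P hdeg hV using hex
  have hmem : ∀ n, Q n ∈ insert (0 : Polynomial Fq) S := by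
    intro n
    rcases eq_or_ne (Q n) 0 with h | h
    · exact Set.mem_insert_iff.mpr (Or.inl h)
    · refine Set.mem_insert_of_mem _ ?_
      have hbdd : BddBelow (Set.range fun P' : Polynomial Fq =>
          labs Fq ((polyToL Fq (Q n) * ξ - α) - polyToL Fq P')) := by
        refine ⟨0, ?_⟩
        rintro _ ⟨P', rfl⟩
        exact labs_nonneg _
      have hub : lnorm Fq (polyToL Fq (Q n) * ξ - α)
          ≤ (Fintype.card Fq : ℝ) ^ (-(s n)) := by
        refine le_trans (ciInf_le hbdd (-(P n))) ?_
        have heq : (polyToL Fq (Q n) * ξ - α) - polyToL Fq (-(P n))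
            = -(α - polyToL Fq (P n) - polyToL Fq (Q n) * ξ) := by
          rw [polyToL_neg]; ring
        rw [heq, labs_neg]
        exact labs_le_zpow (hV n)
      refine le_trans hub ?_
      have hd : ((Q n).natDegree : ℤ) ≤ s n - 2 := (hdeg n).resolve_left h
      have h1 : labs Fq (polyToL Fq (Q n)) ≤ (Fintype.card Fq : ℝ) ^ (s n - 2) :=
        le_trans (labs_polyToL_le _) (zpow_le_zpow_right₀ qR_one_lt.le hd)
      have hX : (0:ℝ) < (Fintype.card Fq : ℝ) ^ 2 * labs Fq (polyToL Fq (Q n)) :=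
        mul_pos (pow_pos qR_pos 2) (labs_pos_of_ne (polyToL_ne_zero h))
      have h2 : (Fintype.card Fq : ℝ) ^ 2 * labs Fq (polyToL Fq (Q n))
          ≤ (Fintype.card Fq : ℝ) ^ (s n) := by
        calc (Fintype.card Fq : ℝ) ^ 2 * labs Fq (polyToL Fq (Q n))
            ≤ (Fintype.card Fq : ℝ) ^ 2 * (Fintype.card Fq : ℝ) ^ (s n - 2) :=
              mul_le_mul_of_nonneg_left h1 (pow_nonneg qR_pos.le 2)
          _ = (Fintype.card Fq : ℝ) ^ (s n) := by
              rw [show ((Fintype.card Fq : ℝ)) ^ (2:ℕ) = (Fintype.card Fq : ℝ) ^ ((2:ℕ):ℤ) by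
                rw [zpow_natCast], ← zpow_add₀ (ne_of_gt qR_pos)]
              norm_num
      have h3 : 1 / ((Fintype.card Fq : ℝ) ^ (s n))
          ≤ 1 / ((Fintype.card Fq : ℝ) ^ 2 * labs Fq (polyToL Fq (Q n))) :=
        one_div_le_one_div_of_le hX h2
      rw [zpow_neg]
      rw [inv_eq_one_div]
      exact h3
  have hfin' : (insert (0 : Polynomial Fq) S).Finite := hfin.insert 0
  haveI : Finite ↥(insert (0 : Polynomial Fq) S) := hfin'.to_subtype
  set g : ℕ → ↥(insert (0 : Polynomial Fq) S) := fun n => ⟨Q n, hmem n⟩ with hg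
  obtain ⟨y, hy⟩ := Finite.exists_infinite_fiber g
  have hyinf : (g ⁻¹' {y} : Set ℕ).Infinite := Set.infinite_coe_iff.mp hy
  obtain ⟨n₀, hn₀⟩ := hyinf.nonempty
  have hQeq : ∀ n ∈ (g ⁻¹' {y} : Set ℕ), Q n = Q n₀ := by
    intro n hn
    have h1 : g n = g n₀ := by
      rw [Set.mem_preimage, Set.mem_singleton_iff] at hn hn₀
      rw [hn, hn₀]
    exact congrArg Subtype.val h1
  have hPeq : ∀ n ∈ (g ⁻¹' {y} : Set ℕ), P n = P n₀ := by
    intro n hn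
    have h0 : ∀ i < (1:ℤ), (polyToL Fq (P n₀ - P n)).coeff i = 0 := by
      intro i hi
      have h1 := hV n i (by have := hs1 n; omega)
      have h2 := hV n₀ i (by have := hs1 n₀; omega)
      have heq : polyToL Fq (P n₀ - P n)
          = (α - polyToL Fq (P n) - polyToL Fq (Q n) * ξ)
            - (α - polyToL Fq (P n₀) - polyToL Fq (Q n₀) * ξ) := by
        rw [hQeq n hn, polyToL_sub]
        ring
      rw [heq, HahnSeries.coeff_sub, h1, h2, sub_zero]
    have := eq_zero_of_coeff_vanish h0
    exact (sub_eq_zero.mp this).symm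
  have hr0 : α - polyToL Fq (P n₀) - polyToL Fq (Q n₀) * ξ = 0 := by
    ext i
    rw [HahnSeries.coeff_zero]
    obtain ⟨n, hn, hni⟩ := hyinf.exists_gt i.toNat
    have hisn : i < s n := by
      have h1 := hsn n
      have h2 : i ≤ (i.toNat : ℤ) := Int.self_le_toNat i
      omega
    have := hV n i hisn
    rwa [hQeq n hn, hPeq n hn] at this
  exact hα (P n₀) (Q n₀) (by linear_combination hr0)


end
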